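/- For every external address s the following hold: (i) the set {t ≥ 0 : (s,t) ∈ X̄} equals [t_s, ∞) ∩ [0,∞), where t_s := inf{t ≥ 0 : (s,t) ∈ X̄} ∈ [0,∞] (with inf ∅ := ∞); in particular this set is empty when t_s = ∞; (ii) every real t > t_s satisfies (s,t) ∈ X; (iii) if t_s < ∞ then 𝓕(s, t_s) = (σ(s), t_{σ(s)}); (iv) the function s ↦ t_s ∈ [0,∞] is lower semicontinuous with respect to the order topology induced by the lexicographic order on ℤ^ℕ. -/

import Mathlib

open Filter Topology ENNReal

noncomputable section

/-- The space of external addresses: integer sequences (indexed from 0, so index `k`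
corresponds to the entry `s_{k+1}` of the paper) with the lexicographic order. -/
abbrev Addr : Type := Lex (ℕ → ℤ)

/-- The shift map `σ` on external addresses. -/
def shiftA (s : Addr) : Addr := toLex (fun n => ofLex s (n + 1))

/-- The model growth function `F(t) = e^t - 1`. -/
def Fexp (t : ℝ) : ℝ := Real.exp t - 1

/-- The model map `𝓕(s,t) = (σ s, F t - 2π |s₂|)`. -/
def Fmod (p : Addr × ℝ) : Addr × ℝ :=
  (shiftA p.1, Fexp p.2 - 2 * Real.pi * |((ofLex p.1 1 : ℤ) : ℝ)|)

/-- The model set `X̄ = {(s,t) : T(𝓕ⁿ(s,t)) ≥ 0 for all n ≥ 0}`. -/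
def Xbar : Set (Addr × ℝ) := {p | ∀ n : ℕ, 0 ≤ (Fmod^[n] p).2}

/-- The model escaping set `X = {(s,t) ∈ X̄ : T(𝓕ⁿ(s,t)) → ∞}`. -/
def Xset : Set (Addr × ℝ) :=
  {p | p ∈ Xbar ∧ Tendsto (fun n : ℕ => (Fmod^[n] p).2) atTop atTop}

/-- The minimal potential `t_s ∈ [0,∞]` of an address (`∞` if `(s,t) ∉ X̄` for all `t ≥ 0`). -/
def tS (s : Addr) : ℝ≥0∞ :=
  sInf (ENNReal.ofReal '' {t : ℝ | 0 ≤ t ∧ (s, t) ∈ Xbar})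

/-- The exponential map `E_κ(z) = e^z + κ`. -/
def Eexp (κ : ℂ) (z : ℂ) : ℂ := Complex.exp z + κ

/-- The escaping set `I(E_κ)`. -/
def escapingSet (κ : ℂ) : Set ℂ :=
  {z | Tendsto (fun n : ℕ => ‖(Eexp κ)^[n] z‖) atTop atTop}

/-- The order topology induced by the lexicographic order on external addresses. -/
instance : TopologicalSpace Addr := Preorder.topology Addr
instance : OrderTopology Addr := ⟨rfl⟩

/-! ### Auxiliary lemmas -/

lemma addr_lt_iff (x y : Addr) :
    x < y ↔ ∃ i, (∀ j, j < i → ofLex x j = ofLex y j) ∧ ofLex x i < ofLex y i := Iff.rfl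

/-- The second coordinate of iterates, as a recursion on plain sequences. -/
def Tn (s : ℕ → ℤ) (t : ℝ) : ℕ → ℝ
  | 0 => t
  | n + 1 => Fexp (Tn s t n) - 2 * Real.pi * |((s (n + 1) : ℝ))|

lemma Tn_zero (s : ℕ → ℤ) (t : ℝ) : Tn s t 0 = t := rfl

lemma Tn_succ (s : ℕ → ℤ) (t : ℝ) (n : ℕ) :
    Tn s t (n + 1) = Fexp (Tn s t n) - 2 * Real.pi * |((s (n + 1) : ℝ))| := rfl

lemma Fexp_mono : Monotone Fexp := fun a b h => by
  simpa [Fexp] using Real.exp_le_exp.2 h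

lemma Fexp_strictMono : StrictMono Fexp := fun a b h => by
  simpa [Fexp] using Real.exp_lt_exp.2 h

lemma Fmod_iter (s : Addr) (t : ℝ) (n : ℕ) :
    Fmod^[n] (s, t) = (toLex (fun k => ofLex s (k + n)), Tn (ofLex s) t n) := by
  induction n with
  | zero => rfl
  | succ n ih =>
    rw [Function.iterate_succ_apply', ih]
    unfold Fmod shiftA
    refine Prod.ext ?_ ?_
    · show toLex (fun k => ofLex (toLex fun k => ofLex s (k + n)) (k + 1)) = _
      simp only [ofLex_toLex]
      congr 1
      funext k
      rw [show k + 1 + n = k + (n + 1) from by omega]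
    · show Fexp (Tn (ofLex s) t n) - 2 * Real.pi * |((ofLex s (1 + n) : ℝ))| = _
      rw [Tn_succ, show 1 + n = n + 1 from by omega]

lemma mem_Xbar_iff (s : Addr) (t : ℝ) :
    (s, t) ∈ Xbar ↔ ∀ n, 0 ≤ Tn (ofLex s) t n := by
  unfold Xbar
  simp only [Set.mem_setOf_eq, Fmod_iter]

/-- The real potential set. -/
def Aset (s : Addr) : Set ℝ := {t | 0 ≤ t ∧ ∀ n, 0 ≤ Tn (ofLex s) t n}

lemma tS_eq_sInf (s : Addr) : tS s = sInf (ENNReal.ofReal '' Aset s) := by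
  unfold tS Aset
  congr 1
  ext t
  simp [mem_Xbar_iff]

lemma Tn_mono (s : ℕ → ℤ) (n : ℕ) : Monotone (fun t => Tn s t n) := by
  induction n with
  | zero => exact fun a b h => h
  | succ n ih =>
    intro a b h
    simp only [Tn_succ]
    exact sub_le_sub_right (Fexp_mono (ih h)) _

lemma Tn_cont (s : ℕ → ℤ) (n : ℕ) : Continuous (fun t => Tn s t n) := by
  induction n with
  | zero => exact continuous_id
  | succ n ih =>
    simp only [Tn_succ, Fexp]
    exact (((Real.continuous_exp.comp ih).sub continuous_const).sub continuous_const)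

lemma Aset_closed (s : Addr) : IsClosed (Aset s) := by
  have : Aset s = {t | 0 ≤ t} ∩ ⋂ n, {t | 0 ≤ Tn (ofLex s) t n} := by
    ext t; simp [Aset, Set.mem_iInter]
  rw [this]
  exact (isClosed_le continuous_const continuous_id).inter
    (isClosed_iInter fun n => isClosed_le continuous_const (Tn_cont _ n))

lemma Aset_bddBelow (s : Addr) : BddBelow (Aset s) := ⟨0, fun x hx => hx.1⟩

lemma Aset_mem_of_le {s : Addr} {u t : ℝ} (hu : u ∈ Aset s) (h : u ≤ t) : t ∈ Aset s :=
  ⟨hu.1.trans h, fun n => (hu.2 n).trans (Tn_mono _ n h)⟩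

lemma tS_eq_ofReal {s : Addr} (h : (Aset s).Nonempty) :
    tS s = ENNReal.ofReal (sInf (Aset s)) := by
  rw [tS_eq_sInf]
  apply le_antisymm
  · exact sInf_le ⟨_, (Aset_closed s).csInf_mem h (Aset_bddBelow s), rfl⟩
  · apply le_sInf
    rintro x ⟨u, hu, rfl⟩
    exact ENNReal.ofReal_le_ofReal (csInf_le (Aset_bddBelow s) hu)

lemma tS_top {s : Addr} (h : ¬ (Aset s).Nonempty) : tS s = ⊤ := by
  rw [tS_eq_sInf, Set.not_nonempty_iff_eq_empty.1 h]
  simp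

lemma Aset_nonempty_of_tS_ne_top {s : Addr} (h : tS s ≠ ⊤) : (Aset s).Nonempty := by
  by_contra hc; exact h (tS_top hc)

lemma Tn_congr {s s' : ℕ → ℤ} (t : ℝ) (n : ℕ) (h : ∀ k, 1 ≤ k → k ≤ n → s k = s' k) :
    Tn s t n = Tn s' t n := by
  induction n with
  | zero => rfl
  | succ n ih =>
    rw [Tn_succ, Tn_succ, ih (fun k h1 h2 => h k h1 (h2.trans (Nat.le_succ n))),
      h (n + 1) (by omega) le_rfl]

lemma Tn_le_iter (s : ℕ → ℤ) (t : ℝ) (n : ℕ) : Tn s t n ≤ Fexp^[n] t := by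
  induction n with
  | zero => exact le_rfl
  | succ n ih =>
    rw [Tn_succ, Function.iterate_succ_apply']
    have h1 : Fexp (Tn s t n) ≤ Fexp (Fexp^[n] t) := Fexp_mono ih
    have h2 : 0 ≤ 2 * Real.pi * |((s (n + 1) : ℝ))| := by positivity
    linarith

lemma Tn_shift (s : Addr) (t : ℝ) (n : ℕ) :
    Tn (ofLex s) t (n + 1) = Tn (ofLex (shiftA s)) (Tn (ofLex s) t 1) n := by
  induction n with
  | zero => rfl
  | succ n ih =>
    rw [Tn_succ (ofLex s) t (n + 1), Tn_succ (ofLex (shiftA s)), ih]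
    rfl

lemma exp_sub_one_ge (x : ℝ) (hx : 0 ≤ x) : x + x ^ 2 / 4 ≤ Real.exp x - 1 := by
  have h2 : x / 2 + 1 ≤ Real.exp (x / 2) := Real.add_one_le_exp _
  have h3 : Real.exp x = Real.exp (x / 2) * Real.exp (x / 2) := by
    rw [← Real.exp_add]; ring_nf
  nlinarith [Real.exp_pos (x / 2)]

/-- Interval structure lemma for the lower semicontinuity proof. -/
lemma ioo_struct (s : Addr) (n : ℕ) (Mz : ℤ) (aa bb : Addr)
    (haa : ∀ k, ofLex aa k = if k < n + 1 then ofLex s k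
      else if k = n + 1 then ofLex s (n + 1) - 1 else Mz)
    (hbb : ∀ k, ofLex bb k = if k < n + 1 then ofLex s k
      else if k = n + 1 then ofLex s (n + 1) + 1 else -Mz)
    (s' : Addr) (hA : aa < s') (hB : s' < bb) :
    (∀ k, k ≤ n → ofLex s' k = ofLex s k) ∧
    (ofLex s' (n + 1) = ofLex s (n + 1) ∨ Mz ≤ |ofLex s' (n + 2)|) := by
  obtain ⟨i, hie, hil⟩ := (addr_lt_iff aa s').1 hA
  obtain ⟨i2, hie2, hil2⟩ := (addr_lt_iff s' bb).1 hB
  have haaeq : ∀ k, k < n + 1 → ofLex aa k = ofLex s k := fun k hk => by rw [haa, if_pos hk]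
  have hbbeq : ∀ k, k < n + 1 → ofLex bb k = ofLex s k := fun k hk => by rw [hbb, if_pos hk]
  have haa1 : ofLex aa (n + 1) = ofLex s (n + 1) - 1 := by
    rw [haa, if_neg (lt_irrefl _), if_pos rfl]
  have hbb1 : ofLex bb (n + 1) = ofLex s (n + 1) + 1 := by
    rw [hbb, if_neg (lt_irrefl _), if_pos rfl]
  have haa2 : ∀ k, n + 1 < k → ofLex aa k = Mz := fun k hk => by
    rw [haa, if_neg (by omega), if_neg (by omega)]
  have hbb2 : ∀ k, n + 1 < k → ofLex bb k = -Mz := fun k hk => by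
    rw [hbb, if_neg (by omega), if_neg (by omega)]
  have hi : n + 1 ≤ i := by
    by_contra hni
    push_neg at hni
    have hai := haaeq i hni
    rcases lt_trichotomy i2 i with h | h | h
    · have e1 := hie i2 h
      have e2 := haaeq i2 (h.trans hni)
      have e3 := hbbeq i2 (h.trans hni)
      omega
    · subst h
      have e3 := hbbeq i2 hni
      omega
    · have e1 := hie2 i h
      have e3 := hbbeq i hni
      omega
  have hi2 : n + 1 ≤ i2 := by
    by_contra hni
    push_neg at hni
    have e3 := hbbeq i2 hni
    have e1 := hie i2 (by omega)
    have e2 := haaeq i2 hni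
    omega
  refine ⟨fun k hk => ?_, ?_⟩
  · have e1 := hie k (by omega)
    have e2 := haaeq k (by omega)
    omega
  rcases eq_or_lt_of_le hi with h | h
  · rcases eq_or_lt_of_le hi2 with h2 | h2
    · left
      have e1 : ofLex aa (n + 1) < ofLex s' (n + 1) := by rw [h]; exact hil
      have e2 : ofLex s' (n + 1) < ofLex bb (n + 1) := by rw [h2]; exact hil2
      omega
    · right
      have hb := hbb2 (n + 2) (by omega)
      have hle : ofLex s' (n + 2) ≤ -Mz := by
        rcases eq_or_lt_of_le (show n + 2 ≤ i2 by omega) with h3 | h3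
        · have e4 : ofLex s' (n + 2) < ofLex bb (n + 2) := by rw [h3]; exact hil2
          omega
        · have e4 := hie2 (n + 2) h3
          omega
      rw [le_abs]
      right; omega
  · rcases eq_or_lt_of_le hi2 with h2 | h2
    · right
      have ha := haa2 (n + 2) (by omega)
      have hle : Mz ≤ ofLex s' (n + 2) := by
        rcases eq_or_lt_of_le (show n + 2 ≤ i by omega) with h3 | h3
        · have e4 : ofLex aa (n + 2) < ofLex s' (n + 2) := by rw [h3]; exact hil
          omega
        · have e4 := hie (n + 2) h3
          omega
      rw [le_abs]
      left; omega
    · exfalso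
      have e1 := hie (n + 1) h
      have e2 := hie2 (n + 1) h2
      omega

lemma Tn_one (s : ℕ → ℤ) (t : ℝ) :
    Tn s t 1 = Fexp t - 2 * Real.pi * |((s 1 : ℝ))| := rfl

/-- **Comb structure of `X̄` and `X`**: for every external address `s`,
(i) for `t ≥ 0` one has `(s,t) ∈ X̄` iff `t ≥ t_s` (so `{t ≥ 0 : (s,t) ∈ X̄} = [t_s,∞) ∩ [0,∞)`,
empty when `t_s = ∞`); (ii) every `t > t_s` satisfies `(s,t) ∈ X`;
(iii) if `t_s < ∞` then `𝓕(s,t_s) = (σ s, t_{σ s})`; and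
(iv) `s ↦ t_s` is lower semicontinuous for the lexicographic order topology. -/
theorem model_comb_structure (s : Addr) :
    (∀ t : ℝ, 0 ≤ t → ((s, t) ∈ Xbar ↔ tS s ≤ ENNReal.ofReal t)) ∧
    (∀ t : ℝ, tS s < ENNReal.ofReal t → (s, t) ∈ Xset) ∧
    (tS s ≠ ⊤ → Fmod (s, (tS s).toReal) = (shiftA s, (tS (shiftA s)).toReal)) ∧
    LowerSemicontinuous tS := by
  have part1 : ∀ (s : Addr) (t : ℝ), 0 ≤ t → ((s, t) ∈ Xbar ↔ tS s ≤ ENNReal.ofReal t) := by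
    intro s t ht
    constructor
    · intro hX
      rw [tS_eq_sInf]
      exact sInf_le ⟨t, ⟨ht, (mem_Xbar_iff s t).1 hX⟩, rfl⟩
    · intro hle
      have hne : (Aset s).Nonempty := by
        by_contra hc
        rw [tS_top hc] at hle
        exact ENNReal.ofReal_ne_top (top_le_iff.1 hle)
      rw [tS_eq_ofReal hne] at hle
      have h0 : sInf (Aset s) ≤ t := (ENNReal.ofReal_le_ofReal_iff ht).1 hle
      have hmem : sInf (Aset s) ∈ Aset s := (Aset_closed s).csInf_mem hne (Aset_bddBelow s)
      exact (mem_Xbar_iff s t).2 (Aset_mem_of_le hmem h0).2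
  refine ⟨part1 s, ?_, ?_, ?_⟩
  · -- part (ii)
    intro t hlt
    have htop : tS s ≠ ⊤ := hlt.ne_top
    have hne := Aset_nonempty_of_tS_ne_top htop
    set t0 := sInf (Aset s) with ht0def
    have hmem : t0 ∈ Aset s := (Aset_closed s).csInf_mem hne (Aset_bddBelow s)
    rw [tS_eq_ofReal hne] at hlt
    have htpos : 0 < t := by
      by_contra hc
      push_neg at hc
      rw [ENNReal.ofReal_eq_zero.2 hc] at hlt
      exact (not_lt_of_ge (zero_le (a := ENNReal.ofReal t0))) hlt
    have h01 : t0 < t := (ENNReal.ofReal_lt_ofReal_iff htpos).1 hlt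
    set d := t - t0 with hd
    have hdpos : 0 < d := sub_pos.2 h01
    set K := d ^ 2 / 4 with hK
    have hKpos : 0 < K := by positivity
    have key : ∀ n : ℕ, d + n * K ≤ Tn (ofLex s) t n - Tn (ofLex s) t0 n := by
      intro n
      induction n with
      | zero => simp [Tn_zero, hd]
      | succ n ih =>
        have hT0 : 0 ≤ Tn (ofLex s) t0 n := hmem.2 n
        set a := Tn (ofLex s) t0 n with ha
        set b := Tn (ofLex s) t n with hb
        have hnK : (0:ℝ) ≤ (n : ℝ) * K := by positivity
        have hba : d ≤ b - a := by linarith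
        have h1 : 1 ≤ Real.exp a := Real.one_le_exp hT0
        have h2 : (b - a) + (b - a) ^ 2 / 4 ≤ Real.exp (b - a) - 1 :=
          exp_sub_one_ge _ (by linarith)
        have h3 : Real.exp b - Real.exp a = Real.exp a * (Real.exp (b - a) - 1) := by
          rw [mul_sub, mul_one, ← Real.exp_add]
          ring_nf
        have h4 : d ^ 2 ≤ (b - a) ^ 2 := by nlinarith
        have h5 : (b - a) + (b - a) ^ 2 / 4 ≤ Real.exp b - Real.exp a := by
          rw [h3]
          nlinarith [Real.exp_pos (b - a)]
        have e : Tn (ofLex s) t (n + 1) - Tn (ofLex s) t0 (n + 1)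
            = Real.exp b - Real.exp a := by
          rw [Tn_succ, Tn_succ, ← ha, ← hb]
          simp [Fexp]
        rw [e]
        push_cast
        nlinarith
    refine ⟨(mem_Xbar_iff s t).2 (fun n => le_trans (hmem.2 n) (Tn_mono _ n h01.le)), ?_⟩
    have hlow : ∀ n : ℕ, d + n * K ≤ (Fmod^[n] (s, t)).2 := by
      intro n
      have h6 := key n
      have h0 := hmem.2 n
      rw [Fmod_iter]
      dsimp only
      linarith
    have hten : Tendsto (fun n : ℕ => d + (n : ℝ) * K) atTop atTop :=
      tendsto_atTop_add_const_left _ d (Tendsto.atTop_mul_const hKpos tendsto_natCast_atTop_atTop)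
    exact tendsto_atTop_mono hlow hten
  · -- part (iii)
    intro htop
    have hne := Aset_nonempty_of_tS_ne_top htop
    set t0 := sInf (Aset s) with ht0def
    have hmem : t0 ∈ Aset s := (Aset_closed s).csInf_mem hne (Aset_bddBelow s)
    have htoR : (tS s).toReal = t0 := by
      rw [tS_eq_ofReal hne, ENNReal.toReal_ofReal hmem.1]
    set r := Tn (ofLex s) t0 1 with hrdef
    have hr0 : 0 ≤ r := hmem.2 1
    have hrA : r ∈ Aset (shiftA s) := by
      refine ⟨hr0, fun n => ?_⟩
      rw [← Tn_shift]
      exact hmem.2 (n + 1)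
    have hne' : (Aset (shiftA s)).Nonempty := ⟨r, hrA⟩
    set t1 := sInf (Aset (shiftA s)) with ht1def
    have hmem' : t1 ∈ Aset (shiftA s) := (Aset_closed _).csInf_mem hne' (Aset_bddBelow _)
    have ht1r : t1 ≤ r := csInf_le (Aset_bddBelow _) hrA
    have hrt1 : r ≤ t1 := by
      by_contra hc
      push_neg at hc
      set c := 2 * Real.pi * |((ofLex s 1 : ℝ))| with hcdef
      have hc0 : 0 ≤ c := by positivity
      have ht10 : 0 ≤ t1 := hmem'.1
      have hpos : (0:ℝ) < 1 + (t1 + c) := by linarith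
      set t2 := Real.log (1 + (t1 + c)) with ht2
      have hFt2 : Fexp t2 = t1 + c := by
        rw [ht2, Fexp, Real.exp_log hpos]
        ring
      have ht20 : 0 ≤ t2 := Real.log_nonneg (by linarith)
      have hT1 : Tn (ofLex s) t2 1 = t1 := by
        rw [Tn_one, hFt2, ← hcdef]
        ring
      have ht2A : t2 ∈ Aset s := by
        refine ⟨ht20, fun n => ?_⟩
        cases n with
        | zero => exact ht20
        | succ m =>
          rw [Tn_shift, hT1]
          exact hmem'.2 m
      have h1 : t0 ≤ t2 := csInf_le (Aset_bddBelow s) ht2A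
      have hFt0 : Fexp t0 = r + c := by
        have : r = Fexp t0 - c := by rw [hrdef, Tn_one, hcdef]
        linarith
      have h2 : t2 < t0 := Fexp_strictMono.lt_iff_lt.1 (by rw [hFt2, hFt0]; linarith)
      linarith
    have hrt : r = t1 := le_antisymm hrt1 ht1r
    refine Prod.ext rfl ?_
    show Fexp (tS s).toReal - 2 * Real.pi * |((ofLex s 1 : ℝ))| = (tS (shiftA s)).toReal
    rw [htoR, tS_eq_ofReal hne', ENNReal.toReal_ofReal hmem'.1, ← hrt, hrdef, Tn_one]
  · -- part (iv)
    intro x c hc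
    obtain ⟨rq, hcr, hrs⟩ := ENNReal.lt_iff_exists_nnreal_btwn.1 hc
    set t : ℝ := (rq : ℝ) with htdef
    have ht0 : 0 ≤ t := rq.2
    have hofr : ENNReal.ofReal t = (rq : ℝ≥0∞) := ENNReal.ofReal_coe_nnreal
    have hnx : (x, t) ∉ Xbar := by
      intro hmemx
      exact absurd ((part1 x t ht0).1 hmemx) (not_le.2 (hofr ▸ hrs))
    rw [mem_Xbar_iff] at hnx
    push_neg at hnx
    obtain ⟨m, hm⟩ := hnx
    obtain ⟨M, hM⟩ := exists_nat_gt (Fexp^[m + 2] t / (2 * Real.pi))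
    set Mz : ℤ := (M : ℤ) + 1 with hMzdef
    have hpi : (0:ℝ) < 2 * Real.pi := by positivity
    have hMreal : Fexp^[m + 2] t < 2 * Real.pi * ((Mz : ℤ) : ℝ) := by
      rw [div_lt_iff₀ hpi] at hM
      have : ((Mz : ℤ) : ℝ) = (M : ℝ) + 1 := by push_cast [hMzdef]; ring
      rw [this]
      nlinarith
    set aa : Addr := toLex (fun k => if k < m + 1 then ofLex x k
      else if k = m + 1 then ofLex x (m + 1) - 1 else Mz) with haadef
    set bb : Addr := toLex (fun k => if k < m + 1 then ofLex x k
      else if k = m + 1 then ofLex x (m + 1) + 1 else -Mz) with hbbdef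
    have haa : ∀ k, ofLex aa k = if k < m + 1 then ofLex x k
      else if k = m + 1 then ofLex x (m + 1) - 1 else Mz := fun k => rfl
    have hbb : ∀ k, ofLex bb k = if k < m + 1 then ofLex x k
      else if k = m + 1 then ofLex x (m + 1) + 1 else -Mz := fun k => rfl
    have hax : aa < x := (addr_lt_iff _ _).2
      ⟨m + 1, fun j hj => by rw [haa, if_pos hj],
        by rw [haa, if_neg (lt_irrefl _), if_pos rfl]; omega⟩
    have hxb : x < bb := (addr_lt_iff _ _).2
      ⟨m + 1, fun j hj => by rw [hbb, if_pos hj],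
        by rw [hbb, if_neg (lt_irrefl _), if_pos rfl]; omega⟩
    have hnhds : Set.Ioo aa bb ∈ 𝓝 x := IsOpen.mem_nhds isOpen_Ioo ⟨hax, hxb⟩
    filter_upwards [hnhds] with s' hs'
    have hkey : ENNReal.ofReal t ≤ tS s' := by
      rw [tS_eq_sInf]
      apply le_sInf
      rintro y ⟨u, hu, rfl⟩
      apply ENNReal.ofReal_le_ofReal
      by_contra hut
      push_neg at hut
      obtain ⟨h1, h2⟩ := ioo_struct x m Mz aa bb haa hbb s' hs'.1 hs'.2
      rcases h2 with h2 | h2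
      · have e : Tn (ofLex s') u m = Tn (ofLex x) u m :=
          Tn_congr u m (fun k _ hk2 => h1 k hk2)
        have hle : Tn (ofLex x) u m ≤ Tn (ofLex x) t m := Tn_mono _ m hut.le
        have h6 := hu.2 m
        linarith
      · have hb1 : Tn (ofLex s') u (m + 1) ≤ Fexp^[m + 1] u := Tn_le_iter _ _ _
        have hb2 : Fexp (Tn (ofLex s') u (m + 1)) ≤ Fexp^[m + 2] u := by
          rw [show m + 2 = (m + 1) + 1 from rfl, Function.iterate_succ_apply']
          exact Fexp_mono hb1
        have hb3 : Fexp^[m + 2] u ≤ Fexp^[m + 2] t := Fexp_mono.iterate (m + 2) hut.le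
        have habs : ((Mz : ℤ) : ℝ) ≤ |((ofLex s' (m + 2) : ℝ))| := by
          rw [← Int.cast_abs]
          exact_mod_cast h2
        have h6 := hu.2 (m + 2)
        rw [Tn_succ] at h6
        nlinarith [mul_le_mul_of_nonneg_left habs hpi.le]
    calc c < (rq : ℝ≥0∞) := hcr
    _ = ENNReal.ofReal t := hofr.symm
    _ ≤ tS s' := hkey
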